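/- Let q ≥ 700 be a prime power and let 𝔽_q be the field with q elements. Then ∑_{P} (deg P)^6 · q^{−2·deg P} ≤ 1.13/q, where the (convergent) sum runs over all monic irreducible polynomials P ∈ 𝔽_q[x]. -/

import Mathlib

open Polynomial

lemma aux_nat (m : ℕ) : (m+2)^6 ≤ 78 * 10^m := by
  induction m with
  | zero => norm_num
  | succ k ih =>
    rcases Nat.eq_zero_or_pos k with rfl | hk
    · norm_num
    · have h1 : 3*(k+3) ≤ 4*(k+2) := by omega
      have h2 : (3*(k+3))^6 ≤ (4*(k+2))^6 := Nat.pow_le_pow_left h1 6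
      have h3 : 729 * (k+3)^6 ≤ 4096 * (k+2)^6 := by
        calc 729 * (k+3)^6 = (3*(k+3))^6 := by ring
          _ ≤ (4*(k+2))^6 := h2
          _ = 4096 * (k+2)^6 := by ring
      have h4 : (k+3)^6 ≤ 10 * (k+2)^6 := by
        have h5 : 4096 * (k+2)^6 ≤ 7290 * (k+2)^6 := Nat.mul_le_mul (by norm_num) le_rfl
        have h6 : 729 * (k+3)^6 ≤ 729 * (10 * (k+2)^6) := by
          calc 729 * (k+3)^6 ≤ 4096 * (k+2)^6 := h3
            _ ≤ 7290 * (k+2)^6 := h5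
            _ = 729 * (10 * (k+2)^6) := by ring
        exact Nat.le_of_mul_le_mul_left h6 (by norm_num)
      calc (k+1+2)^6 = (k+3)^6 := by ring_nf
        _ ≤ 10 * (k+2)^6 := h4
        _ ≤ 10 * (78 * 10^k) := by omega
        _ = 78 * 10^(k+1) := by ring

lemma aux_analytic (x : ℝ) (hx0 : 0 < x) (hx : x ≤ 1/700) :
    (∑' n : ℕ, (n:ℝ)^6 * x^n) ≤ 1.13 * x := by
  have hx1 : x < 1 := by linarith
  have hxnorm : ‖x‖ < 1 := by rw [Real.norm_eq_abs, abs_of_pos hx0]; exact hx1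
  have hsum : Summable (fun n : ℕ => (n:ℝ)^6 * x^n) :=
    summable_pow_mul_geometric_of_norm_lt_one 6 hxnorm
  have h10x : 10 * x < 1 := by linarith
  have h10x0 : (0:ℝ) ≤ 10 * x := by linarith
  have hgeo : Summable (fun m : ℕ => 78 * x^2 * (10*x)^m) :=
    (summable_geometric_of_lt_one h10x0 h10x).mul_left _
  have hshift : Summable (fun m : ℕ => ((m+2 : ℕ):ℝ)^6 * x^(m+2)) := by
    exact_mod_cast (summable_nat_add_iff 2).mpr hsum
  have hcomp : ∀ m : ℕ, ((m+2 : ℕ):ℝ)^6 * x^(m+2) ≤ 78 * x^2 * (10*x)^m := by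
    intro m
    have hcast : ((m+2 : ℕ):ℝ)^6 ≤ 78 * 10^m := by
      exact_mod_cast (Nat.cast_le (α := ℝ)).mpr (aux_nat m)
    calc ((m+2 : ℕ):ℝ)^6 * x^(m+2) ≤ (78 * 10^m) * x^(m+2) :=
          mul_le_mul_of_nonneg_right hcast (by positivity)
      _ = 78 * x^2 * (10*x)^m := by ring
  have htail : (∑' m : ℕ, ((m+2 : ℕ):ℝ)^6 * x^(m+2)) ≤ 78 * x^2 * (1 - 10*x)⁻¹ := by
    have h1 := Summable.tsum_le_tsum hcomp hshift hgeo
    rwa [tsum_mul_left, tsum_geometric_of_lt_one h10x0 h10x] at h1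
  have hsplit := Summable.sum_add_tsum_nat_add 2 hsum
  have hfin : (∑ i ∈ Finset.range 2, (i:ℝ)^6 * x^i) = x := by
    simp [Finset.sum_range_succ]
  rw [← hsplit, hfin]
  have hpos : (0:ℝ) < 1 - 10*x := by linarith
  have hbd : 78 * x^2 * (1 - 10*x)⁻¹ ≤ 0.13 * x := by
    rw [mul_inv_le_iff₀ hpos]
    nlinarith
  have : (∑' m : ℕ, ((m+2 : ℕ):ℝ)^6 * x^(m+2)) = ∑' i : ℕ, ((i+2 : ℕ):ℝ)^6 * x^(i+2) := rfl
  push_cast at htail ⊢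
  linarith [htail]

open Polynomial

section Main
variable (q : ℕ) (F : Type*) [Field F] [Fintype F]

noncomputable def gfun : (Σ n : ℕ, (Fin n → F)) → ℝ :=
  fun p => (p.1 : ℝ)^6 * ((q : ℝ)^(2 * p.1))⁻¹

noncomputable def iota : {P : Polynomial F // P.Monic ∧ Irreducible P} → Σ n : ℕ, (Fin n → F) :=
  fun P => ⟨(P : Polynomial F).natDegree, fun i => (P : Polynomial F).coeff i⟩

lemma iota_inj : Function.Injective (iota F) := by
  rintro ⟨P, hPm, hPi⟩ ⟨Q, hQm, hQi⟩ h
  simp only [iota] at h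
  obtain ⟨hd, hh⟩ := Sigma.ext_iff.mp h
  simp only at hd hh
  have hd' : P.natDegree = Q.natDegree := hd
  have hc : ∀ i : Fin P.natDegree, P.coeff i = Q.coeff ((Fin.cast hd' i) : Fin Q.natDegree) :=
    (Fin.heq_fun_iff hd').mp hh
  have : P = Q := by
    ext k
    rcases lt_trichotomy k P.natDegree with hk | hk | hk
    · have := hc ⟨k, hk⟩
      simpa using this
    · subst hk
      rw [hPm.coeff_natDegree, hd', hQm.coeff_natDegree]
    · rw [coeff_eq_zero_of_natDegree_lt hk, coeff_eq_zero_of_natDegree_lt (hd' ▸ hk)]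
  simp [this]
end Main

set_option maxHeartbeats 1000000 in
theorem stmt15 (q : ℕ) (hq : IsPrimePow q) (hq700 : 700 ≤ q)
    (F : Type*) [Field F] [Fintype F] (hF : Fintype.card F = q) :
    (∑' P : {P : Polynomial F // P.Monic ∧ Irreducible P},
        ((P : Polynomial F).natDegree : ℝ) ^ 6 *
          ((q : ℝ) ^ (2 * (P : Polynomial F).natDegree))⁻¹) ≤ 1.13 / q := by
  have hq0 : (0:ℝ) < (q:ℝ) := by
    have : (700:ℝ) ≤ q := by exact_mod_cast hq700
    linarith
  have hqne : (q:ℝ) ≠ 0 := ne_of_gt hq0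
  set x : ℝ := (q:ℝ)⁻¹ with hxdef
  have hx0 : 0 < x := by positivity
  have hx : x ≤ 1/700 := by
    have h700 : (700:ℝ) ≤ q := by exact_mod_cast hq700
    rw [hxdef, one_div]
    exact inv_anti₀ (by norm_num) h700
  -- fiber sums
  have hfiber : ∀ n : ℕ, (∑' _ : (Fin n → F), ((n:ℝ)^6 * ((q:ℝ)^(2*n))⁻¹)) = (n:ℝ)^6 * x^n := by
    intro n
    rw [tsum_const, Nat.card_fun]
    simp only [Nat.card_eq_fintype_card, Fintype.card_fin, hF, nsmul_eq_mul]
    push_cast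
    rw [two_mul, pow_add, hxdef, inv_pow]
    have hqn : (q:ℝ)^n ≠ 0 := pow_ne_zero _ hqne
    field_simp
  have hxnorm : ‖x‖ < 1 := by
    rw [Real.norm_eq_abs, abs_of_pos hx0]; linarith [hx]
  have hsumx : Summable (fun n : ℕ => (n:ℝ)^6 * x^n) :=
    summable_pow_mul_geometric_of_norm_lt_one 6 hxnorm
  have hgnonneg : ∀ p, 0 ≤ gfun q F p := by
    intro p; unfold gfun; positivity
  have hgsum : Summable (gfun q F) := by
    rw [summable_sigma_of_nonneg hgnonneg]
    refine ⟨fun n => Summable.of_finite, ?_⟩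
    apply Summable.congr hsumx
    intro n
    exact (hfiber n).symm
  have hfsum0 : Summable ((gfun q F) ∘ (iota F)) := hgsum.comp_injective (iota_inj F)
  have hfsum : Summable (fun P : {P : Polynomial F // P.Monic ∧ Irreducible P} =>
      ((P : Polynomial F).natDegree : ℝ) ^ 6 * ((q : ℝ) ^ (2 * (P : Polynomial F).natDegree))⁻¹) :=
    hfsum0.congr (fun P => rfl)
  have hle : (∑' P : {P : Polynomial F // P.Monic ∧ Irreducible P},
        ((P : Polynomial F).natDegree : ℝ) ^ 6 *
          ((q : ℝ) ^ (2 * (P : Polynomial F).natDegree))⁻¹) ≤ ∑' p, gfun q F p := by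
    exact Summable.tsum_le_tsum_of_inj (iota F) (iota_inj F) (fun c _ => hgnonneg c)
      (fun P => le_of_eq rfl) hfsum hgsum
  have hgval : (∑' p, gfun q F p) = ∑' n : ℕ, (n:ℝ)^6 * x^n := by
    rw [Summable.tsum_sigma hgsum]
    exact tsum_congr hfiber
  have hfinal := aux_analytic x hx0 hx
  have h113 : 1.13 * x = 1.13 / q := by rw [hxdef]; ring
  rw [← h113]
  calc _ ≤ ∑' p, gfun q F p := hle
    _ = ∑' n : ℕ, (n:ℝ)^6 * x^n := hgval
    _ ≤ 1.13 * x := hfinal
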